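/- Suppose f : ℕⁿ → K satisfies the difference equation Σ_{0 ≤ α ≤ m} c_α f(x+α) = 0 for every x ∈ ℕⁿ. Then for every β ∈ ℕⁿ, the coefficient of w^β in Q · G equals Σ_{α ≤ m, α+β ≥ m+I} c_α · f(α+β−m−I) when I ≤ β and ¬(m+I ≤ β), and equals 0 otherwise; in particular every argument α+β−m−I occurring in these sums lies in the initial set X₀, so Q·G is determined by the initial data of f alone. -/

import Mathlib

/-- Formula (6) of Theorem 1: if `f : ℕⁿ → K` satisfies the difference equation
`Σ_{0 ≤ α ≤ m} c_α f(x+α) = 0`, then for the generating series `G = Σ_x f(x) w^{x+I}`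
and `Q = Σ_{α ≤ m} c_α w^{m-α}`, the coefficient of `w^β` in `Q·G` equals
`Σ_{α ≤ m, m+I ≤ α+β} c_α · f(α+β−m−I)` when `I ≤ β` and `¬(m+I ≤ β)`,
and equals `0` otherwise. -/
theorem generating_series_formula_two
    (n : ℕ) (hn : 1 ≤ n) (K : Type*) [Field K]
    (m : Fin n →₀ ℕ) (c : (Fin n →₀ ℕ) → K) (f : (Fin n →₀ ℕ) → K)
    (hf : ∀ x : Fin n →₀ ℕ, ∑ α ∈ Finset.Iic m, c α * f (x + α) = 0)
    (I : Fin n →₀ ℕ) (hI : ∀ j, I j = 1)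
    (G : MvPowerSeries (Fin n) K)
    (hG : ∀ e : Fin n →₀ ℕ,
      MvPowerSeries.coeff e G = if I ≤ e then f (e - I) else 0)
    (Q : MvPowerSeries (Fin n) K)
    (hQ : Q = ∑ α ∈ Finset.Iic m, (MvPowerSeries.monomial (m - α)) (c α)) :
    ∀ β : Fin n →₀ ℕ,
      MvPowerSeries.coeff β (Q * G) =
        if I ≤ β ∧ ¬ m + I ≤ β then
          ∑ α ∈ (Finset.Iic m).filter (fun α => m + I ≤ α + β),
            c α * f (α + β - (m + I))
        else 0 := by
  intro β
  have key : ∀ α ∈ Finset.Iic m,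
      MvPowerSeries.coeff β ((MvPowerSeries.monomial (m - α)) (c α) * G) =
        if m + I ≤ α + β then c α * f (α + β - (m + I)) else 0 := by
    intro α hα
    rw [Finset.mem_Iic] at hα
    rw [MvPowerSeries.coeff_monomial_mul]
    by_cases h : m + I ≤ α + β
    · have h1 : m - α ≤ β := by
        rw [tsub_le_iff_right]
        calc m ≤ m + I := le_self_add
        _ ≤ α + β := h
        _ = β + α := add_comm _ _
      have h2 : I ≤ β - (m - α) := by
        intro j
        have ha := hα j
        have hb := h1 j
        have hc := h j
        simp only [Finsupp.tsub_apply, Finsupp.add_apply, hI j] at *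
        omega
      rw [if_pos h1, hG, if_pos h2, if_pos h]
      congr 2
      ext j
      have ha := hα j
      simp only [Finsupp.tsub_apply, Finsupp.add_apply, hI j]
      omega
    · by_cases h1 : m - α ≤ β
      · rw [if_pos h1, hG, if_neg, mul_zero, if_neg h]
        intro hc
        apply h
        intro j
        have ha := hα j
        have hb := h1 j
        have hd := hc j
        simp only [Finsupp.tsub_apply, Finsupp.add_apply, hI j] at *
        omega
      · rw [if_neg h1, if_neg h]
  rw [hQ, Finset.sum_mul, map_sum, Finset.sum_congr rfl key]
  by_cases hmI : m + I ≤ β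
  · rw [if_neg (by simp [hmI])]
    have heq : ∀ α ∈ Finset.Iic m, (if m + I ≤ α + β then c α * f (α + β - (m + I)) else 0)
        = c α * f ((β - (m + I)) + α) := by
      intro α hα
      rw [if_pos (le_trans hmI le_add_self)]
      congr 2
      rw [add_comm, tsub_add_eq_add_tsub hmI]
    rw [Finset.sum_congr rfl heq, hf]
  · by_cases hIβ : I ≤ β
    · rw [if_pos ⟨hIβ, hmI⟩, Finset.sum_filter]
    · rw [if_neg (by simp [hIβ])]
      apply Finset.sum_eq_zero
      intro α hα
      rw [Finset.mem_Iic] at hα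
      rw [if_neg]
      intro h
      apply hIβ
      intro j
      have h1 := h j
      have h2 := hα j
      simp only [Finsupp.add_apply, hI j] at *
      omega
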